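/- For any Grassmann necklace N and any i, j ∈ [n], one has N_i ≪_i N_j; in particular, any two sets of a Grassmann necklace are weakly separated. -/

import Mathlib

open Finset

variable {n : ℕ} [NeZero n]

/-- Position of `x` in the cyclic order on `Fin n` starting at `i`. -/
def cpos (i x : Fin n) : ℕ := ((x - i : Fin n) : ℕ)

/-- `X ≪_i Y`: every element of `X \\ Y` precedes every element of `Y \\ X`
in the cyclic order starting at `i`. -/
def Ll (i : Fin n) (X Y : Finset (Fin n)) : Prop :=
  ∀ x ∈ X \ Y, ∀ y ∈ Y \ X, cpos i x < cpos i y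

/-- `X` and `Y` are weakly separated. -/
def WSep (X Y : Finset (Fin n)) : Prop := ∃ i : Fin n, Ll i X Y

/-- A Grassmann necklace in `C([n], r)`. -/
def IsNecklace (N : Fin n → Finset (Fin n)) (r : ℕ) : Prop :=
  (∀ i, (N i).card = r) ∧ ∀ i, (N i).erase i ⊆ N (i + 1)

open Fin.NatCast

lemma cpos_lt (i x : Fin n) : cpos i x < n := (x - i).isLt

lemma cpos_inj {i x y : Fin n} (h : cpos i x = cpos i y) : x = y := by
  have := Fin.val_injective h
  exact sub_left_injective this

lemma cpos_add (i : Fin n) (d : ℕ) (hd : d < n) : cpos i (i + (d : Fin n)) = d := by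
  simp [cpos, add_sub_cancel_left, Fin.val_cast_of_lt hd]

lemma add_cpos (i x : Fin n) : i + ((cpos i x : ℕ) : Fin n) = x := by
  simp [cpos, Fin.cast_val_eq_self, add_sub_cancel]

lemma persist (N : Fin n → Finset (Fin n))
    (hstep : ∀ i, (N i).erase i ⊆ N (i + 1)) (i z : Fin n) (hz : z ∈ N i) :
    ∀ d : ℕ, d ≤ cpos i z → z ∈ N (i + (d : Fin n)) := by
  intro d
  induction d with
  | zero => intro _; simpa using hz
  | succ d ih =>
    intro hd
    have hd' : d < n := lt_of_lt_of_le (Nat.lt_of_lt_of_le (Nat.lt_succ_self d) hd)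
      (le_of_lt (cpos_lt i z))
    have hz' : z ∈ N (i + (d : Fin n)) := ih (Nat.le_of_succ_le hd)
    have hne : z ≠ i + (d : Fin n) := by
      intro h
      have := cpos_add i d hd'
      rw [← h] at this
      omega
    have hmem : z ∈ N (i + (d : Fin n) + 1) := hstep _ (Finset.mem_erase.mpr ⟨hne, hz'⟩)
    have hcast : ((d + 1 : ℕ) : Fin n) = (d : Fin n) + 1 := by push_cast; ring
    rw [hcast, ← add_assoc]
    exact hmem

/-- For a Grassmann necklace, `N_i ≪_i N_j` for all `i, j`; in particular all
sets of a necklace are pairwise weakly separated. -/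
theorem necklace_ll (N : Fin n → Finset (Fin n)) (r : ℕ)
    (hN : IsNecklace N r) (hii : ∀ i, i ∈ N i) (i j : Fin n) :
    Ll i (N i) (N j) ∧ WSep (N i) (N j) := by
  have key : Ll i (N i) (N j) := by
    intro x hx y hy
    rw [Finset.mem_sdiff] at hx hy
    have hxj : cpos i x < cpos i j := by
      by_contra h
      push_neg at h
      have := persist N hN.2 i x hx.1 (cpos i j) h
      rw [add_cpos] at this
      exact hx.2 this
    have hyj : cpos i j ≤ cpos i y := by
      by_contra h
      push_neg at h
      have hyi : y ≠ i := fun he => hy.2 (he ▸ hii i)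
      have h0 : 0 < cpos i y := by
        rcases Nat.eq_zero_or_pos (cpos i y) with h' | h'
        · have hc : cpos i y = cpos i i := by simpa [cpos] using h'
          exact absurd (cpos_inj hc) hyi
        · exact h'
      set a := cpos i y with ha
      set b := cpos i j with hb
      have hbn : b < n := cpos_lt i j
      have hb0 : 0 < b := lt_trans h0 h
      have hnn : ((n : ℕ) : Fin n) = 0 := by
        simp
      have e1 : j + ((n - b : ℕ) : Fin n) = i := by
        conv_lhs => rw [← add_cpos i j, ← hb]
        rw [add_assoc, ← Nat.cast_add, show b + (n - b) = n by omega, hnn, add_zero]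
      have e2 : j + ((n - b + a : ℕ) : Fin n) = y := by
        conv_lhs => rw [← add_cpos i j, ← hb]
        rw [Nat.cast_add (n - b) a, add_assoc, ← add_assoc ((b : ℕ) : Fin n),
          ← Nat.cast_add, show b + (n - b) = n by omega, hnn, zero_add, ha]
        exact add_cpos i y
      have c1 : cpos j i = n - b := by rw [← e1, cpos_add _ _ (by omega)]
      have c2 : cpos j y = n - b + a := by rw [← e2, cpos_add _ _ (by omega)]
      have hcc : cpos j i ≤ cpos j y := by omega
      have := persist N hN.2 j y hy.1 (cpos j i) hcc
      rw [add_cpos] at this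
      exact hy.2 this
    omega
  exact ⟨key, i, key⟩
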